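/- Let G and H be compact topological groups with H connected, and let Φ : G → H be a surjective continuous homomorphism. Then the image under Φ of the identity component of G equals H. -/

import Mathlib

/-- If `G` and `H` are compact (Hausdorff) topological groups with `H` connected and
`Φ : G → H` is a surjective continuous homomorphism, then the image under `Φ` of the
identity component of `G` is all of `H`. -/
theorem image_identityComponent_eq_of_connected {G H : Type*}
    [Group G] [TopologicalSpace G] [IsTopologicalGroup G] [CompactSpace G] [T2Space G]
    [Group H] [TopologicalSpace H] [IsTopologicalGroup H] [CompactSpace H] [T2Space H]
    [ConnectedSpace H]
    (Φ : G →* H) (hc : Continuous Φ) (hs : Function.Surjective Φ) :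
    Φ '' connectedComponent (1 : G) = Set.univ := by
  apply Set.eq_univ_of_forall
  intro h
  rw [connectedComponent_eq_iInter_isClopen (1 : G)]
  -- It suffices that the fiber of `h` meets the intersection of all clopen nbhds of 1.
  have hfiber : IsCompact (Φ ⁻¹' {h}) := (isClosed_singleton.preimage hc).isCompact
  have key : (Φ ⁻¹' {h} ∩ ⋂ s : { s : Set G // IsClopen s ∧ (1 : G) ∈ s }, (s : Set G)).Nonempty := by
    apply hfiber.inter_iInter_nonempty _ (fun s => s.2.1.1)
    intro u
    -- the finite intersection is clopen and contains 1
    have hclopen : IsClopen (⋂ i ∈ u, (i : Set G)) := by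
      apply Set.Finite.isClopen_biInter u.finite_toSet
      exact fun i _ => i.2.1
    have hone : (1 : G) ∈ ⋂ i ∈ u, (i : Set G) :=
      Set.mem_biInter fun i _ => i.2.2
    obtain ⟨U, hU⟩ :=
      IsTopologicalGroup.exist_openNormalSubgroup_sub_clopen_nhds_of_one hclopen hone
    -- `Φ(U)` is a clopen subgroup of connected `H`, hence everything.
    have hUopen : IsOpen (U.toSubgroup : Set G) := U.isOpen'
    have : Subgroup.FiniteIndex U.toSubgroup := by
      have : Finite (G ⧸ U.toSubgroup) :=
        U.toSubgroup.quotient_finite_of_isOpen hUopen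
      exact U.toSubgroup.finiteIndex_of_finite_quotient
    have hUcompact : IsCompact (U.toSubgroup : Set G) :=
      (OpenSubgroup.isClosed ⟨U.toSubgroup, hUopen⟩).isCompact
    have himclosed : IsClosed ((U.toSubgroup.map Φ : Subgroup H) : Set H) := by
      have : IsCompact ((U.toSubgroup.map Φ : Subgroup H) : Set H) := by
        simpa [Subgroup.coe_map] using hUcompact.image hc
      exact this.isClosed
    have himfi : Subgroup.FiniteIndex (U.toSubgroup.map Φ) := by
      constructor
      intro h0
      have hdvd := Subgroup.index_map_dvd U.toSubgroup hs
      rw [h0] at hdvd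
      exact Subgroup.FiniteIndex.index_ne_zero (zero_dvd_iff.mp hdvd)
    have himopen : IsOpen ((U.toSubgroup.map Φ : Subgroup H) : Set H) :=
      Subgroup.isOpen_of_isClosed_of_finiteIndex _ himclosed
    have himuniv : ((U.toSubgroup.map Φ : Subgroup H) : Set H) = Set.univ :=
      IsClopen.eq_univ ⟨himclosed, himopen⟩ ⟨1, one_mem _⟩
    have : h ∈ (U.toSubgroup.map Φ : Subgroup H) := by
      rw [← SetLike.mem_coe, himuniv]; trivial
    obtain ⟨x, hxU, hxh⟩ := this
    exact ⟨x, by simpa using hxh, hU hxU⟩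
  obtain ⟨x, hx1, hx2⟩ := key
  exact ⟨x, hx2, hx1⟩
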